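/- For every integer m ≥ 2, every real a > 0 and every r > 0: m · a · cosh(a r) · ∫_0^r sinh^{m−1}(a t) dt > sinh^m(a r). Equivalently, the hyperbolic space ℍ^m(b) of constant curvature b = −a² < 0, viewed as the model space with warping function w(r) = sinh(a r)/a, satisfies the strict balance condition q_w(r) η_w(r) > 1/m for all r > 0, where η_w = w'/w and q_w(r) = (∫_0^r w^{m−1} dt)/w(r)^{m−1}. -/

import Mathlib

open Real intervalIntegral

private lemma sinh_pow_hasDerivAt (m : ℕ) (a t : ℝ) :
    HasDerivAt (fun x : ℝ => Real.sinh (a * x) ^ m)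
      ((m : ℝ) * a * Real.cosh (a * t) * Real.sinh (a * t) ^ (m - 1)) t := by
  have h1 : HasDerivAt (fun x : ℝ => a * x) a t := by
    simpa using (hasDerivAt_id t).const_mul a
  have h2 : HasDerivAt (fun x : ℝ => Real.sinh (a * x)) (Real.cosh (a * t) * a) t :=
    (Real.hasDerivAt_sinh (a * t)).comp t h1
  have h3 := h2.fun_pow m
  exact h3.congr_deriv (by ring)

private lemma key (m : ℕ) (hm : 2 ≤ m) (a : ℝ) (ha : 0 < a) (r : ℝ) (hr : 0 < r) :
    Real.sinh (a * r) ^ m <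
      (m : ℝ) * a * Real.cosh (a * r) * ∫ t in (0 : ℝ)..r, Real.sinh (a * t) ^ (m - 1) := by
  have hcont : Continuous fun t : ℝ => (m : ℝ) * a * Real.cosh (a * t) * Real.sinh (a * t) ^ (m - 1) := by
    continuity
  have hftc : (∫ t in (0:ℝ)..r, (m : ℝ) * a * Real.cosh (a * t) * Real.sinh (a * t) ^ (m - 1))
      = Real.sinh (a * r) ^ m := by
    have := intervalIntegral.integral_eq_sub_of_hasDerivAt
      (fun t _ => sinh_pow_hasDerivAt m a t) (hcont.intervalIntegrable 0 r)
    simpa [Real.sinh_zero, zero_pow (by omega : m ≠ 0)] using this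
  rw [← hftc, ← intervalIntegral.integral_const_mul]
  apply intervalIntegral.integral_lt_integral_of_continuousOn_of_le_of_exists_lt hr
    hcont.continuousOn (Continuous.continuousOn (by continuity))
  · intro x hx
    have hx0 : 0 < x := hx.1
    have hxr : x ≤ r := hx.2
    have hcosh : Real.cosh (a * x) ≤ Real.cosh (a * r) := by
      rw [Real.cosh_le_cosh, abs_of_nonneg (by positivity), abs_of_nonneg (by positivity)]
      nlinarith
    have hs : 0 ≤ Real.sinh (a * x) ^ (m - 1) := by
      have := Real.sinh_nonneg_iff.2 (by positivity : (0:ℝ) ≤ a * x)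
      positivity
    have hma : (0:ℝ) ≤ (m : ℝ) * a := by positivity
    nlinarith [mul_le_mul_of_nonneg_left hcosh hma]
  · refine ⟨r / 2, ⟨by linarith, by linarith⟩, ?_⟩
    have hcosh : Real.cosh (a * (r / 2)) < Real.cosh (a * r) := by
      rw [Real.cosh_lt_cosh, abs_of_nonneg (by positivity), abs_of_nonneg (by positivity)]
      nlinarith
    have hs : 0 < Real.sinh (a * (r / 2)) ^ (m - 1) := by
      have := Real.sinh_pos_iff.2 (by positivity : (0:ℝ) < a * (r / 2))
      positivity
    have hma : (0:ℝ) < (m : ℝ) * a := by positivity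
    have := mul_lt_mul_of_pos_left hcosh hma
    nlinarith

theorem hyperbolic_space_strictly_balanced :
    ∀ m : ℕ, 2 ≤ m → ∀ a : ℝ, 0 < a → ∀ r : ℝ, 0 < r →
      Real.sinh (a * r) ^ m <
        (m : ℝ) * a * Real.cosh (a * r) *
          ∫ t in (0 : ℝ)..r, Real.sinh (a * t) ^ (m - 1) ∧
      1 / (m : ℝ) <
        ((∫ t in (0 : ℝ)..r, (Real.sinh (a * t) / a) ^ (m - 1)) /
            (Real.sinh (a * r) / a) ^ (m - 1)) *
          (deriv (fun x : ℝ => Real.sinh (a * x) / a) r / (Real.sinh (a * r) / a)) := by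
  intro m hm a ha r hr
  have hkey := key m hm a ha r hr
  refine ⟨hkey, ?_⟩
  have hS : 0 < Real.sinh (a * r) := Real.sinh_pos_iff.2 (by positivity)
  have hderiv : deriv (fun x : ℝ => Real.sinh (a * x) / a) r = Real.cosh (a * r) := by
    have h1 : HasDerivAt (fun x : ℝ => a * x) a r := by
      simpa using (hasDerivAt_id r).const_mul a
    have h2 : HasDerivAt (fun x : ℝ => Real.sinh (a * x)) (Real.cosh (a * r) * a) r :=
      (Real.hasDerivAt_sinh (a * r)).comp r h1
    have h3 := h2.div_const a
    rw [h3.deriv]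
    field_simp
  rw [hderiv]
  have hint : (∫ t in (0 : ℝ)..r, (Real.sinh (a * t) / a) ^ (m - 1))
      = (∫ t in (0 : ℝ)..r, Real.sinh (a * t) ^ (m - 1)) / a ^ (m - 1) := by
    rw [← intervalIntegral.integral_div]
    simp [div_pow]
  rw [hint]
  have ham : (0:ℝ) < a ^ (m - 1) := by positivity
  have hSm : (0:ℝ) < Real.sinh (a * r) ^ (m - 1) := by positivity
  have hm0 : (0:ℝ) < (m:ℝ) := by positivity
  have hC : 0 < Real.cosh (a * r) := Real.cosh_pos _
  have hI : 0 < ∫ t in (0 : ℝ)..r, Real.sinh (a * t) ^ (m - 1) := by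
    nlinarith [pow_pos hS m, mul_pos (mul_pos hm0 ha) hC]
  set I := ∫ t in (0 : ℝ)..r, Real.sinh (a * t) ^ (m - 1)
  have heq : (I / a ^ (m - 1)) / (Real.sinh (a * r) / a) ^ (m - 1) *
      (Real.cosh (a * r) / (Real.sinh (a * r) / a))
      = a * Real.cosh (a * r) * I / Real.sinh (a * r) ^ m := by
    rw [div_pow]
    have : Real.sinh (a * r) ^ m = Real.sinh (a * r) ^ (m - 1) * Real.sinh (a * r) := by
      rw [← pow_succ]; congr 1; omega
    rw [this]
    field_simp
  rw [heq, lt_div_iff₀ (by positivity), one_div, inv_mul_lt_iff₀ hm0]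
  nlinarith
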